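/- Let d₁, d₂, d₃ > 0 satisfy the strict triangle inequalities, and let θ_α = arccos((d_β² + d_γ² − d_α²)/(2 d_β d_γ)) for {α,β,γ} = {1,2,3}. Let M be the symmetric 3×3 real matrix with diagonal entries M_{αα} = 1/d_α² and off-diagonal entries M_{αβ} = −cos θ_γ/(d_α d_β) for {α,β,γ} = {1,2,3}. Then M is positive semidefinite, and for x ∈ ℝ³ one has xᵀ M x = 0 if and only if x is a scalar multiple of (d₁², d₂², d₃²). -/

import Mathlib

open Matrix

/-- The angle opposite the side `d_α`, by the law of cosines
(for distinct `α, β, γ`, `θ_α = arccos((d_β² + d_γ² − d_α²)/(2 d_β d_γ))`). -/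
noncomputable def triAngle (d : Fin 3 → ℝ) (α : Fin 3) : ℝ :=
  Real.arccos ((d (α + 1) ^ 2 + d (α + 2) ^ 2 - d α ^ 2) /
    (2 * d (α + 1) * d (α + 2)))

/-- The symmetric matrix with `M_{αα} = 1/d_α²` and
`M_{αβ} = −cos θ_γ/(d_α d_β)` for `{α,β,γ} = {1,2,3}`; note that for distinct
`α, β : Fin 3` the third index is `γ = −(α + β)`. -/
noncomputable def hessMatrix (d : Fin 3 → ℝ) : Matrix (Fin 3) (Fin 3) ℝ :=
  fun α β =>
    if α = β then 1 / d α ^ 2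
    else -Real.cos (triAngle d (-(α + β))) / (d α * d β)

lemma cos_triAngle (d : Fin 3 → ℝ) (hpos : ∀ α, 0 < d α)
    (htri : ∀ α, d α < d (α + 1) + d (α + 2)) (α : Fin 3) :
    Real.cos (triAngle d α) =
      (d (α + 1) ^ 2 + d (α + 2) ^ 2 - d α ^ 2) / (2 * d (α + 1) * d (α + 2)) := by
  have h1 := hpos (α+1); have h2 := hpos (α+2); have h0 := hpos α
  have ht0 := htri α
  have ht1 := htri (α+1)
  have ht2 := htri (α+2)
  have e1 : α + 1 + 1 = α + 2 := by rw [add_assoc]; rfl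
  have e2 : α + 1 + 2 = α := by
    have h : (1:Fin 3) + 2 = 0 := rfl
    rw [add_assoc, h, add_zero]
  have e3 : α + 2 + 1 = α := by
    have h : (2:Fin 3) + 1 = 0 := rfl
    rw [add_assoc, h, add_zero]
  have e4 : α + 2 + 2 = α + 1 := by
    have h : (2:Fin 3) + 2 = 1 := rfl
    rw [add_assoc, h]
  rw [e1, e2] at ht1
  rw [e3, e4] at ht2
  have hD : 0 < 2 * d (α+1) * d (α+2) := by positivity
  apply Real.cos_arccos
  · rw [le_div_iff₀ hD]
    nlinarith [mul_pos (sub_pos.2 ht0) (show 0 < d (α+1) + d (α+2) + d α by positivity)]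
  · rw [div_le_one hD]
    nlinarith [mul_pos (sub_pos.2 ht1) (sub_pos.2 ht2)]

lemma hessMatrix_quadform (d : Fin 3 → ℝ) (hpos : ∀ α, 0 < d α)
    (htri : ∀ α, d α < d (α + 1) + d (α + 2)) (x : Fin 3 → ℝ) :
    x ⬝ᵥ (hessMatrix d).mulVec x =
      ((2 * d 0 ^ 2 * (x 0 * d 1 ^ 2 * d 2 ^ 2 - x 1 * d 0 ^ 2 * d 2 ^ 2)
          + (d 0 ^ 2 + d 2 ^ 2 - d 1 ^ 2) * (x 1 * d 0 ^ 2 * d 2 ^ 2 - x 2 * d 0 ^ 2 * d 1 ^ 2)) ^ 2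
        + (4 * d 0 ^ 2 * d 2 ^ 2 - (d 0 ^ 2 + d 2 ^ 2 - d 1 ^ 2) ^ 2)
          * (x 1 * d 0 ^ 2 * d 2 ^ 2 - x 2 * d 0 ^ 2 * d 1 ^ 2) ^ 2)
      / (4 * d 0 ^ 2 * (d 0 ^ 2 * d 1 ^ 2 * d 2 ^ 2) ^ 2) := by
  have c0 : Real.cos (triAngle d 0) = (d 1 ^ 2 + d 2 ^ 2 - d 0 ^ 2) / (2 * d 1 * d 2) :=
    cos_triAngle d hpos htri 0
  have c1 : Real.cos (triAngle d 1) = (d 2 ^ 2 + d 0 ^ 2 - d 1 ^ 2) / (2 * d 2 * d 0) :=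
    cos_triAngle d hpos htri 1
  have c2 : Real.cos (triAngle d 2) = (d 0 ^ 2 + d 1 ^ 2 - d 2 ^ 2) / (2 * d 0 * d 1) :=
    cos_triAngle d hpos htri 2
  have h0 := (hpos 0).ne'
  have h1 := (hpos 1).ne'
  have h2 := (hpos 2).ne'
  have m00 : hessMatrix d 0 0 = 1 / d 0 ^ 2 := rfl
  have m11 : hessMatrix d 1 1 = 1 / d 1 ^ 2 := rfl
  have m22 : hessMatrix d 2 2 = 1 / d 2 ^ 2 := rfl
  have m01 : hessMatrix d 0 1 = -Real.cos (triAngle d 2) / (d 0 * d 1) := rfl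
  have m10 : hessMatrix d 1 0 = -Real.cos (triAngle d 2) / (d 1 * d 0) := rfl
  have m02 : hessMatrix d 0 2 = -Real.cos (triAngle d 1) / (d 0 * d 2) := rfl
  have m20 : hessMatrix d 2 0 = -Real.cos (triAngle d 1) / (d 2 * d 0) := rfl
  have m12 : hessMatrix d 1 2 = -Real.cos (triAngle d 0) / (d 1 * d 2) := rfl
  have m21 : hessMatrix d 2 1 = -Real.cos (triAngle d 0) / (d 2 * d 1) := rfl
  simp only [dotProduct, Matrix.mulVec, Fin.sum_univ_three, m00, m01, m02, m10,
    m11, m12, m20, m21, m22, c0, c1, c2]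
  field_simp
  ring

set_option maxHeartbeats 1000000 in
/-- For a Euclidean triangle with side lengths `d₁, d₂, d₃`, the
matrix `M` with `M_{αα} = 1/d_α²`, `M_{αβ} = −cos θ_γ/(d_α d_β)` is positive
semidefinite, and `xᵀ M x = 0` iff `x` is a scalar multiple of `(d₁², d₂², d₃²)`. -/
theorem hessMatrix_posSemidef_and_kernel (d : Fin 3 → ℝ)
    (hpos : ∀ α, 0 < d α)
    (htri : ∀ α, d α < d (α + 1) + d (α + 2)) :
    (hessMatrix d).PosSemidef ∧
    ∀ x : Fin 3 → ℝ,
      x ⬝ᵥ (hessMatrix d).mulVec x = 0 ↔ ∃ c : ℝ, x = c • fun α => d α ^ 2 := by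
  have h0 := hpos 0
  have h1 := hpos 1
  have h2 := hpos 2
  have t0 : 0 < d 1 + d 2 - d 0 := by have := htri 0; simp at this ⊢; linarith
  have t1 : 0 < d 2 + d 0 - d 1 := by
    have := htri 1
    rw [show (1:Fin 3) + 1 = 2 from rfl, show (1:Fin 3) + 2 = 0 from rfl] at this
    linarith
  have t2 : 0 < d 0 + d 1 - d 2 := by
    have := htri 2
    rw [show (2:Fin 3) + 1 = 0 from rfl, show (2:Fin 3) + 2 = 1 from rfl] at this
    linarith
  have hDd : 0 < 4 * d 0 ^ 2 * d 2 ^ 2 - (d 0 ^ 2 + d 2 ^ 2 - d 1 ^ 2) ^ 2 := by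
    nlinarith [mul_pos (mul_pos t0 t1) (mul_pos t2 (show 0 < d 0 + d 1 + d 2 by positivity))]
  have hden : 0 < 4 * d 0 ^ 2 * (d 0 ^ 2 * d 1 ^ 2 * d 2 ^ 2) ^ 2 := by positivity
  have key : ∀ x : Fin 3 → ℝ, 0 ≤ x ⬝ᵥ (hessMatrix d).mulVec x := by
    intro x
    rw [hessMatrix_quadform d hpos htri x]
    apply div_nonneg _ hden.le
    have := sq_nonneg (x 1 * d 0 ^ 2 * d 2 ^ 2 - x 2 * d 0 ^ 2 * d 1 ^ 2)
    nlinarith [sq_nonneg (2 * d 0 ^ 2 * (x 0 * d 1 ^ 2 * d 2 ^ 2 - x 1 * d 0 ^ 2 * d 2 ^ 2)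
      + (d 0 ^ 2 + d 2 ^ 2 - d 1 ^ 2) * (x 1 * d 0 ^ 2 * d 2 ^ 2 - x 2 * d 0 ^ 2 * d 1 ^ 2))]
  constructor
  · refine Matrix.PosSemidef.of_dotProduct_mulVec_nonneg ?_ ?_
    · ext α β
      simp only [Matrix.conjTranspose_apply, hessMatrix, star_trivial]
      rcases eq_or_ne α β with h | h
      · simp [h]
      · rw [if_neg (Ne.symm h), if_neg h, add_comm β α, mul_comm (d β) (d α)]
    · intro x
      simpa using key x
  · intro x
    constructor
    · intro hx
      rw [hessMatrix_quadform d hpos htri x] at hx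
      rw [div_eq_zero_iff] at hx
      rcases hx with hx | hx
      swap
      · exact absurd hx hden.ne'
      set U := x 0 * d 1 ^ 2 * d 2 ^ 2 - x 1 * d 0 ^ 2 * d 2 ^ 2 with hU
      set V := x 1 * d 0 ^ 2 * d 2 ^ 2 - x 2 * d 0 ^ 2 * d 1 ^ 2 with hV
      have hDV : (4 * d 0 ^ 2 * d 2 ^ 2 - (d 0 ^ 2 + d 2 ^ 2 - d 1 ^ 2) ^ 2) * V ^ 2 = 0 := by
        nlinarith [sq_nonneg (2 * d 0 ^ 2 * U + (d 0 ^ 2 + d 2 ^ 2 - d 1 ^ 2) * V),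
          mul_nonneg hDd.le (sq_nonneg V)]
      have hV0 : V = 0 := by
        rcases mul_eq_zero.1 hDV with h | h
        · exact absurd h hDd.ne'
        · exact sq_eq_zero_iff.1 h
      have hU0 : U = 0 := by
        have hsq : (2 * d 0 ^ 2 * U + (d 0 ^ 2 + d 2 ^ 2 - d 1 ^ 2) * V) ^ 2 = 0 := by
          linarith
        have h2' := sq_eq_zero_iff.1 hsq
        rw [hV0, mul_zero, add_zero] at h2'
        rcases mul_eq_zero.1 h2' with h | h
        · exact absurd h (by positivity)
        · exact h
      have hc1 : (d 1:ℝ) ^ 2 ≠ 0 := by positivity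
      have hc2 : (d 2:ℝ) ^ 2 ≠ 0 := by positivity
      have hu : x 0 * d 1 ^ 2 * d 2 ^ 2 = x 1 * d 0 ^ 2 * d 2 ^ 2 := by
        have := hU0; rw [hU] at this; linarith
      have hv : x 1 * d 0 ^ 2 * d 2 ^ 2 = x 2 * d 0 ^ 2 * d 1 ^ 2 := by
        have := hV0; rw [hV] at this; linarith
      refine ⟨x 0 / d 0 ^ 2, ?_⟩
      funext α
      fin_cases α
      · show x 0 = x 0 / d 0 ^ 2 * d 0 ^ 2
        field_simp
      · show x 1 = x 0 / d 0 ^ 2 * d 1 ^ 2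
        rw [div_mul_eq_mul_div, eq_comm, div_eq_iff (by positivity)]
        have := mul_right_cancel₀ hc2
          (show x 0 * d 1 ^ 2 * d 2 ^ 2 = (x 1 * d 0 ^ 2) * d 2 ^ 2 by linarith)
        linarith
      · show x 2 = x 0 / d 0 ^ 2 * d 2 ^ 2
        rw [div_mul_eq_mul_div, eq_comm, div_eq_iff (by positivity)]
        have huv : x 0 * d 2 ^ 2 * d 1 ^ 2 = (x 2 * d 0 ^ 2) * d 1 ^ 2 := by
          have := mul_right_cancel₀ hc2
            (show x 0 * d 1 ^ 2 * d 2 ^ 2 = (x 1 * d 0 ^ 2) * d 2 ^ 2 by linarith)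
          nlinarith [this, hv]
        have := mul_right_cancel₀ hc1 huv
        linarith
    · rintro ⟨k, hk⟩
      rw [hessMatrix_quadform d hpos htri x]
      have e0 : x 0 = k * d 0 ^ 2 := by rw [hk]; rfl
      have e1 : x 1 = k * d 1 ^ 2 := by rw [hk]; rfl
      have e2 : x 2 = k * d 2 ^ 2 := by rw [hk]; rfl
      rw [e0, e1, e2, div_eq_zero_iff]
      left
      ring
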